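/- Every N-set has Lebesgue measure zero. -/

import Mathlib

open MeasureTheory Filter Set
open scoped FourierTransform ENNReal NNReal

/-- Distance from a real number to the nearest integer. -/
noncomputable def nintDist (x : ℝ) : ℝ := |x - round x|

/-- `E` is a Dirichlet set. -/
def IsDirichlet (E : Set ℝ) : Prop :=
  ∃ n : ℕ → ℕ, StrictMono n ∧ ∀ x ∈ E, ∀ k : ℕ, nintDist (n k * x) ≤ (1/2) ^ k

/-- `E` is a pseudo-Dirichlet set. -/
def IsPseudoDirichlet (E : Set ℝ) : Prop :=
  ∃ n : ℕ → ℕ, StrictMono n ∧ ∀ x ∈ E, ∀ᶠ k in atTop, nintDist (n k * x) ≤ (1/2) ^ k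

/-- `E` is an Arbault set. -/
def IsArbault (E : Set ℝ) : Prop :=
  ∃ n : ℕ → ℕ, StrictMono n ∧ ∀ x ∈ E,
    Tendsto (fun k => nintDist (n k * x)) atTop (nhds 0)

/-- `E` is an N-set. -/
def IsNSet (E : Set ℝ) : Prop :=
  ∃ a : ℕ → ℝ, (∀ n, 0 ≤ a n) ∧ ¬ Summable a ∧
    ∀ x ∈ E, Summable (fun n => a n * nintDist (n * x))

/-- `s` is an Fσ set: a countable union of closed sets. -/
def IsFsigma (s : Set ℝ) : Prop :=
  ∃ f : ℕ → Set ℝ, (∀ n, IsClosed (f n)) ∧ s = ⋃ n, f n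

lemma nintDist_eq (x : ℝ) : nintDist x = |Int.fract (x + 1/2) - 1/2| := by
  rw [nintDist, round_eq, Int.fract]
  congr 1
  ring

lemma measurable_nintDist : Measurable nintDist := by
  have : nintDist = fun x => |Int.fract (x + 1/2) - 1/2| := funext nintDist_eq
  rw [this]
  exact (((measurable_id.add_const _).fract).sub_const _).abs

lemma nintDist_nonneg (x : ℝ) : 0 ≤ nintDist x := abs_nonneg _

open Real in
lemma key_cos (x : ℝ) : 1 - Real.cos (2 * π * x) ≤ 2 * π * nintDist x := by
  set t : ℝ := x - round x with ht
  have h1 : Real.cos (2 * π * x) = Real.cos (2 * π * t) := by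
    have := Real.cos_add_int_mul_two_pi (2 * π * t) (round x)
    rw [← this]
    congr 1
    ring
  have h2 : Real.cos (2 * π * t) = 1 - 2 * Real.sin (π * t) ^ 2 := by
    have h3 := Real.cos_two_mul (π * t)
    have h4 := Real.sin_sq_add_cos_sq (π * t)
    have h5 : 2 * π * t = 2 * (π * t) := by ring
    rw [h5, h3]
    nlinarith
  have h5 : |Real.sin (π * t)| ≤ |π * t| := Real.abs_sin_le_abs
  have h6 : |Real.sin (π * t)| ≤ 1 := abs_le.mpr ⟨Real.neg_one_le_sin _, Real.sin_le_one _⟩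
  have h7 : Real.sin (π * t) ^ 2 ≤ |Real.sin (π * t)| * |π * t| := by
    nlinarith [sq_abs (Real.sin (π * t)), abs_nonneg (Real.sin (π * t)), abs_nonneg (π * t)]
  have h8 : |π * t| = π * nintDist x := by
    rw [abs_mul, abs_of_pos Real.pi_pos]; rfl
  rw [h1, h2]
  nlinarith [abs_nonneg (π * t)]

open Real in
lemma rl_cos {A : Set ℝ} (hA : MeasurableSet A) (hfin : volume A < ⊤) :
    Tendsto (fun n : ℕ => ∫ x in A, Real.cos (2 * π * (n * x))) atTop (nhds 0) := by
  have hfm : IsFiniteMeasure (volume.restrict A) :=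
    ⟨by rwa [Measure.restrict_apply_univ]⟩
  set f : ℝ → ℂ := A.indicator 1 with hf
  have hRL := Real.tendsto_integral_exp_smul_cocompact f
  have hcast : Tendsto (fun n : ℕ => (n : ℝ)) atTop (cocompact ℝ) := by
    refine (tendsto_natCast_atTop_atTop).mono_right ?_
    rw [cocompact_eq_atBot_atTop]
    exact le_sup_right
  have h2 := (Complex.continuous_re.tendsto 0).comp (hRL.comp hcast)
  simp only [Complex.zero_re] at h2
  convert h2 using 2 with n
  have hint : ∀ w : ℝ, (∫ v : ℝ, 𝐞 (-(v * w)) • f v) = ∫ v in A, Complex.exp (-(2 * π * (v * w)) * Complex.I) := by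
    intro w
    have : ∀ v : ℝ, 𝐞 (-(v * w)) • f v
        = A.indicator (fun v => Complex.exp (-(2 * π * (v * w)) * Complex.I)) v := by
      intro v
      by_cases hv : v ∈ A
      · simp only [hf, Set.indicator_of_mem hv, Pi.one_apply, smul_eq_mul,
          Circle.smul_def, Real.fourierChar_apply, mul_one]
        congr 2
        push_cast
        ring
      · simp [hf, Set.indicator_of_notMem hv]
    rw [show (fun v : ℝ => 𝐞 (-(v * w)) • f v) = fun v => A.indicator (fun v => Complex.exp (-(2 * π * (v * w)) * Complex.I)) v from funext this,
      integral_indicator hA]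
  have hInt : Integrable (fun v : ℝ => Complex.exp (-(2 * π * (v * (n:ℝ))) * Complex.I)) (volume.restrict A) := by
    refine Integrable.mono' (integrable_const 1) ?_ ?_
    · exact (Complex.continuous_exp.comp (by continuity)).aestronglyMeasurable
    · refine Filter.Eventually.of_forall fun v => ?_
      rw [Complex.norm_exp]
      simp [Complex.mul_re]
  simp only [Function.comp_apply, hint]
  rw [← RCLike.re_to_complex, ← integral_re hInt]
  congr 1
  ext v
  rw [RCLike.re_to_complex, Complex.exp_re]
  have h1 : (-(2 * ↑π * (↑v * ((n:ℝ):ℂ))) * Complex.I).re = 0 := by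
    simp [Complex.mul_re, Complex.mul_im]
  have h2 : (-(2 * ↑π * (↑v * ((n:ℝ):ℂ))) * Complex.I).im = -(2 * π * (v * n)) := by
    simp [Complex.mul_re, Complex.mul_im]
  rw [h1, h2]
  rw [Real.exp_zero, Real.cos_neg, one_mul]
  ring_nf

open Real in
theorem stmt13 (E : Set ℝ) (hE : IsNSet E) : volume E = 0 := by
  obtain ⟨a, ha0, hNS, hsum⟩ := hE
  set g : ℝ → ℝ≥0∞ := fun x => ∑' n : ℕ, ENNReal.ofReal (a n * nintDist (n * x)) with hg
  have hterm_meas : ∀ n : ℕ, Measurable fun x : ℝ => ENNReal.ofReal (a n * nintDist (n * x)) :=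
    fun n => ((measurable_nintDist.comp (measurable_const_mul (n:ℝ))).const_mul (a n)).ennreal_ofReal
  have hg_meas : Measurable g := Measurable.ennreal_tsum hterm_meas
  have hES : E ⊆ {x | g x < ⊤} := by
    intro x hx
    have hs := hsum x hx
    have hgx : g x = ENNReal.ofReal (∑' n, a n * nintDist (n * x)) :=
      (ENNReal.ofReal_tsum_of_nonneg (fun n => mul_nonneg (ha0 n) (nintDist_nonneg _)) hs).symm
    simp only [mem_setOf_eq, hgx]
    exact ENNReal.ofReal_lt_top
  refine measure_mono_null hES ?_
  by_contra hpos
  -- find a piece of positive finite measure on which `g` is bounded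
  have hcover : {x | g x < ⊤} ⊆ ⋃ N : ℕ, ({x | g x ≤ (N:ℝ≥0∞)} ∩ Icc (-(N:ℝ)) N) := by
    intro x hx
    obtain ⟨N1, hN1⟩ := ENNReal.exists_nat_gt hx.ne
    obtain ⟨N2, hN2⟩ := exists_nat_gt |x|
    refine mem_iUnion.mpr ⟨max N1 N2, ⟨?_, ?_⟩⟩
    · refine hN1.le.trans ?_
      exact_mod_cast Nat.cast_le.mpr (le_max_left N1 N2)
    · have hx2 : |x| ≤ ((max N1 N2 : ℕ) : ℝ) := by
        refine hN2.le.trans ?_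
        exact_mod_cast Nat.cast_le.mpr (le_max_right N1 N2)
      rw [abs_le] at hx2
      exact ⟨hx2.1, hx2.2⟩
  have hex : ∃ N : ℕ, volume ({x | g x ≤ (N:ℝ≥0∞)} ∩ Icc (-(N:ℝ)) N) ≠ 0 := by
    by_contra h
    push_neg at h
    exact hpos (measure_mono_null hcover (measure_iUnion_null h))
  obtain ⟨N, hN⟩ := hex
  set A : Set ℝ := {x | g x ≤ (N:ℝ≥0∞)} ∩ Icc (-(N:ℝ)) N with hA
  have hA_meas : MeasurableSet A :=
    (measurableSet_le hg_meas measurable_const).inter measurableSet_Icc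
  have hAfin : volume A < ⊤ := by
    refine lt_of_le_of_lt (measure_mono inter_subset_right) ?_
    rw [Real.volume_Icc]
    exact ENNReal.ofReal_lt_top
  have hfm : IsFiniteMeasure (volume.restrict A) :=
    ⟨by rwa [Measure.restrict_apply_univ]⟩
  set μt : ℝ := (volume A).toReal with hμt
  have hμt_pos : 0 < μt := ENNReal.toReal_pos hN hAfin.ne
  -- upper bound for the integral of g over A
  have hupper : ∫⁻ x in A, g x ≤ (N:ℝ≥0∞) * volume A := by
    calc ∫⁻ x in A, g x ≤ ∫⁻ _ in A, (N:ℝ≥0∞) :=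
          setLIntegral_mono measurable_const fun x hx => hx.1
      _ = (N:ℝ≥0∞) * volume A := by
          rw [setLIntegral_const]
  have hTon : ∫⁻ x in A, g x = ∑' n : ℕ, ∫⁻ x in A, ENNReal.ofReal (a n * nintDist (n * x)) := by
    rw [hg]
    exact lintegral_tsum fun n => (hterm_meas n).aemeasurable
  -- integrability of cosines on A
  have hcosInt : ∀ n : ℕ, Integrable (fun x : ℝ => Real.cos (2 * π * (n * x))) (volume.restrict A) := by
    intro n
    refine Integrable.mono' (integrable_const 1) ?_ ?_
    · exact (Real.continuous_cos.comp (by continuity)).aestronglyMeasurable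
    · exact Filter.Eventually.of_forall fun v => by
        simpa using Real.abs_cos_le_one _
  -- Riemann-Lebesgue: eventually the integral of 1 - cos is at least μt/2
  have hRL := rl_cos hA_meas hAfin
  have habs : Tendsto (fun n : ℕ => |∫ x in A, Real.cos (2 * π * (n * x))|) atTop (nhds 0) := by
    have := (continuous_abs.tendsto 0).comp hRL
    simpa using hRL.abs
  have hev : ∀ᶠ n : ℕ in atTop, μt / 2 ≤ ∫ x in A, (1 - Real.cos (2 * π * (n * x))) := by
    filter_upwards [habs.eventually_lt_const (by positivity : (0:ℝ) < μt / 2)] with n hn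
    have hintsub : ∫ x in A, (1 - Real.cos (2 * π * (n * x)))
        = μt - ∫ x in A, Real.cos (2 * π * (n * x)) := by
      rw [integral_sub (integrable_const 1) (hcosInt n)]
      simp [hμt, Measure.restrict_apply_univ]
      rfl
    rw [hintsub]
    have := abs_lt.mp hn
    linarith [this.1]
  obtain ⟨n₀, hn₀⟩ := eventually_atTop.mp hev
  set c : ℝ≥0∞ := ENNReal.ofReal (μt / (4 * π)) with hc
  have hπ := Real.pi_pos
  have hc_ne : c ≠ 0 := by
    rw [hc]
    simp only [ne_eq, ENNReal.ofReal_eq_zero, not_le]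
    positivity
  -- per-term lower bound
  have hterm_lb : ∀ n : ℕ, n₀ ≤ n →
      ENNReal.ofReal (a n) * c ≤ ∫⁻ x in A, ENNReal.ofReal (a n * nintDist (n * x)) := by
    intro n hn
    have hpt : ∀ x : ℝ, a n / (2 * π) * (1 - Real.cos (2 * π * ((n:ℝ) * x)))
        ≤ a n * nintDist ((n:ℝ) * x) := by
      intro x
      have hk := key_cos ((n:ℝ) * x)
      have h0 := ha0 n
      have hd : 0 ≤ a n / (2 * π) := div_nonneg h0 (by positivity)
      have := mul_le_mul_of_nonneg_left hk hd
      calc a n / (2 * π) * (1 - Real.cos (2 * π * ((n:ℝ) * x)))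
          ≤ a n / (2 * π) * (2 * π * nintDist ((n:ℝ) * x)) := this
        _ = a n * nintDist ((n:ℝ) * x) := by
            field_simp
    have hmeas1 : Measurable fun x : ℝ => ENNReal.ofReal (1 - Real.cos (2 * π * ((n:ℝ) * x))) := by
      refine Measurable.ennreal_ofReal ?_
      exact measurable_const.sub (Real.continuous_cos.measurable.comp ((measurable_const_mul _).const_mul _))
    have hint1 : Integrable (fun x : ℝ => 1 - Real.cos (2 * π * ((n:ℝ) * x))) (volume.restrict A) :=
      (integrable_const 1).sub (hcosInt n)
    have hnn1 : 0 ≤ᵐ[volume.restrict A] fun x : ℝ => 1 - Real.cos (2 * π * ((n:ℝ) * x)) := by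
      refine Filter.Eventually.of_forall fun x => ?_
      have := Real.cos_le_one (2 * π * ((n:ℝ) * x))
      show (0:ℝ) ≤ 1 - Real.cos (2 * π * ((n:ℝ) * x))
      linarith
    calc ENNReal.ofReal (a n) * c
        = ENNReal.ofReal (a n / (2 * π)) * ENNReal.ofReal (μt / 2) := by
          rw [hc, ← ENNReal.ofReal_mul (ha0 n),
            ← ENNReal.ofReal_mul (div_nonneg (ha0 n) (by positivity))]
          congr 1
          ring
      _ ≤ ENNReal.ofReal (a n / (2 * π)) * ∫⁻ x in A, ENNReal.ofReal (1 - Real.cos (2 * π * ((n:ℝ) * x))) := by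
          refine mul_le_mul_right ?_ _
          rw [← ofReal_integral_eq_lintegral_ofReal hint1 hnn1]
          exact ENNReal.ofReal_le_ofReal (hn₀ n hn)
      _ = ∫⁻ x in A, ENNReal.ofReal (a n / (2 * π)) * ENNReal.ofReal (1 - Real.cos (2 * π * ((n:ℝ) * x))) := by
          rw [lintegral_const_mul _ hmeas1]
      _ = ∫⁻ x in A, ENNReal.ofReal (a n / (2 * π) * (1 - Real.cos (2 * π * ((n:ℝ) * x)))) := by
          refine lintegral_congr fun x => ?_
          rw [← ENNReal.ofReal_mul (div_nonneg (ha0 n) (by positivity))]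
      _ ≤ ∫⁻ x in A, ENNReal.ofReal (a n * nintDist ((n:ℝ) * x)) :=
          lintegral_mono fun x => ENNReal.ofReal_le_ofReal (hpt x)
  -- the tail of the series diverges
  have htail : ¬ Summable fun k : ℕ => a (k + n₀) := by
    rw [summable_nat_add_iff]
    exact hNS
  have htail' : (∑' k : ℕ, ENNReal.ofReal (a (k + n₀))) = ⊤ := by
    by_contra h
    have : Summable fun k : ℕ => (a (k + n₀)).toNNReal := by
      rw [← ENNReal.tsum_coe_ne_top_iff_summable]
      convert h using 2 with k
      rfl
    refine htail ?_
    have := NNReal.summable_coe.mpr this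
    convert this using 2 with k
    rw [Real.coe_toNNReal _ (ha0 _)]
  have hbig : (⊤:ℝ≥0∞) ≤ ∑' n : ℕ, ∫⁻ x in A, ENNReal.ofReal (a n * nintDist (n * x)) := by
    have h1 : (∑' k : ℕ, ENNReal.ofReal (a (k + n₀)) * c) = ⊤ := by
      rw [ENNReal.tsum_mul_right, htail', ENNReal.top_mul hc_ne]
    calc (⊤:ℝ≥0∞) = ∑' k : ℕ, ENNReal.ofReal (a (k + n₀)) * c := h1.symm
      _ ≤ ∑' k : ℕ, ∫⁻ x in A, ENNReal.ofReal (a (k + n₀) * nintDist ((k + n₀ : ℕ) * x)) :=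
          ENNReal.tsum_le_tsum fun k => hterm_lb (k + n₀) (Nat.le_add_left _ _)
      _ ≤ ∑' n : ℕ, ∫⁻ x in A, ENNReal.ofReal (a n * nintDist (n * x)) :=
          ENNReal.tsum_comp_le_tsum_of_injective (add_left_injective n₀) _
  rw [← hTon] at hbig
  have : (⊤:ℝ≥0∞) ≤ (N:ℝ≥0∞) * volume A := hbig.trans hupper
  have hlt : (N:ℝ≥0∞) * volume A < ⊤ :=
    ENNReal.mul_lt_top (ENNReal.natCast_lt_top N) hAfin
  exact absurd (lt_of_le_of_lt this hlt) (lt_irrefl _)
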